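/- Let a > 0 and let j, k be integers with j ≤ k − 1. Then ∫_{k−1}^{k}∫_{k−1}^{k}∫_{j−1}^{j}∫_{j−1}^{j} [ (1/(4a²))·e^{−a|t−s|}·e^{−a|r−q|} + (1/(2a²))·e^{−a(t+s)}·e^{a(r+q)} ] dq dr ds dt = (e^{−a} − 1 + a)²/a⁶ + (e^{2a}·(1 − e^{−a})⁴/(2a⁶))·e^{−2a(k−j)}. -/

import Mathlib

open intervalIntegral Real

lemma exp_int (a : ℝ) (ha : a ≠ 0) (x y : ℝ) :
    ∫ s in x..y, Real.exp (a * s) = (Real.exp (a * y) - Real.exp (a * x)) / a := by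
  have hF : ∀ u : ℝ, HasDerivAt (fun u => Real.exp (a * u) / a) (Real.exp (a * u)) u := by
    intro u
    have h1 : HasDerivAt (fun u : ℝ => a * u) a u := by simpa using (hasDerivAt_id u).const_mul a
    have h2 := (h1.exp).div_const a
    simpa [mul_comm, mul_div_assoc, mul_div_cancel_left₀, ha] using h2
  rw [intervalIntegral.integral_eq_sub_of_hasDerivAt (fun u _ => hF u)
    ((Real.continuous_exp.comp (continuous_const.mul continuous_id)).intervalIntegrable x y)]
  ring

lemma cont_abs (a t : ℝ) : Continuous fun s => Real.exp (-a * |t - s|) :=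
  ((continuous_const.mul ((continuous_const.sub continuous_id).abs)).rexp)

lemma exp_abs_int (a : ℝ) (ha : a ≠ 0) (c t : ℝ) (h1 : c - 1 ≤ t) (h2 : t ≤ c) :
    ∫ s in (c-1)..c, Real.exp (-a * |t - s|)
      = (2 - Real.exp (-a * (t - (c-1))) - Real.exp (-a * (c - t))) / a := by
  have hi : ∀ x y : ℝ, IntervalIntegrable (fun s => Real.exp (-a * |t - s|)) MeasureTheory.volume x y :=
    fun x y => (cont_abs a t).intervalIntegrable x y
  rw [← intervalIntegral.integral_add_adjacent_intervals (hi (c-1) t) (hi t c)]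
  have e1 : ∫ s in (c-1)..t, Real.exp (-a * |t - s|)
      = Real.exp (-a * t) * ((Real.exp (a * t) - Real.exp (a * (c-1))) / a) := by
    rw [intervalIntegral.integral_congr (g := fun s => Real.exp (-a * t) * Real.exp (a * s)) ?_,
      intervalIntegral.integral_const_mul, exp_int a ha]
    intro s hs
    rw [Set.uIcc_of_le h1] at hs
    show Real.exp (-a * |t - s|) = Real.exp (-a * t) * Real.exp (a * s)
    rw [abs_of_nonneg (by linarith [hs.2]), show -a * (t - s) = -a * t + a * s by ring,
      Real.exp_add]
  have e2 : ∫ s in t..c, Real.exp (-a * |t - s|)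
      = Real.exp (a * t) * ((Real.exp (-a * c) - Real.exp (-a * t)) / (-a)) := by
    rw [intervalIntegral.integral_congr (g := fun s => Real.exp (a * t) * Real.exp (-a * s)) ?_,
      intervalIntegral.integral_const_mul, exp_int (-a) (neg_ne_zero.mpr ha)]
    intro s hs
    rw [Set.uIcc_of_le h2] at hs
    show Real.exp (-a * |t - s|) = Real.exp (a * t) * Real.exp (-a * s)
    rw [abs_of_nonpos (by linarith [hs.1]), show -a * -(t - s) = a * t + -a * s by ring,
      Real.exp_add]
  rw [e1, e2]
  have k1 : Real.exp (-a * t) * Real.exp (a * t) = 1 := by rw [← Real.exp_add]; ring_nf; exact Real.exp_zero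
  have k2 : Real.exp (-a * t) * Real.exp (a * (c-1)) = Real.exp (-a * (t - (c-1))) := by
    rw [← Real.exp_add]; ring_nf
  have k3 : Real.exp (a * t) * Real.exp (-a * c) = Real.exp (-a * (c - t)) := by
    rw [← Real.exp_add]; ring_nf
  linear_combination ((2:ℝ)/a) * k1 - (1/a) * k2 - (1/a) * k3

lemma split_int (x y P R : ℝ) (f g : ℝ → ℝ)
    (hf : IntervalIntegrable f MeasureTheory.volume x y)
    (hg : IntervalIntegrable g MeasureTheory.volume x y) :
    ∫ q in x..y, (P * f q + R * g q)
      = P * (∫ q in x..y, f q) + R * (∫ q in x..y, g q) := by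
  rw [intervalIntegral.integral_add (hf.const_mul P) (hg.const_mul R),
    intervalIntegral.integral_const_mul, intervalIntegral.integral_const_mul]

lemma closed_int (a : ℝ) (ha : a ≠ 0) (c : ℝ) :
    ∫ t in (c-1)..c, (2 - Real.exp (-a * (t - (c-1))) - Real.exp (-a * (c - t))) / a
      = 2 * (Real.exp (-a) - 1 + a) / a ^ 2 := by
  have heq : Set.EqOn (fun t => (2 - Real.exp (-a * (t - (c-1))) - Real.exp (-a * (c - t))) / a)
      (fun t => (1/a) * 2 + (-(1/a) * Real.exp (a*(c-1))) * Real.exp (-a * t)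
        + (-(1/a) * Real.exp (-a*c)) * Real.exp (a * t)) (Set.uIcc (c-1) c) := by
    intro t _
    show (2 - Real.exp (-a * (t - (c-1))) - Real.exp (-a * (c - t))) / a = _
    rw [show -a * (t - (c-1)) = a*(c-1) + -a*t by ring, show -a * (c - t) = -a*c + a*t by ring,
      Real.exp_add, Real.exp_add]
    ring
  rw [intervalIntegral.integral_congr heq]
  have i1 : IntervalIntegrable (fun _ : ℝ => (2:ℝ)) MeasureTheory.volume (c-1) c :=
    intervalIntegrable_const
  have i2 : IntervalIntegrable (fun t => Real.exp (-a * t)) MeasureTheory.volume (c-1) c :=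
    (Real.continuous_exp.comp (continuous_const.mul continuous_id)).intervalIntegrable _ _
  have i3 : IntervalIntegrable (fun t => Real.exp (a * t)) MeasureTheory.volume (c-1) c :=
    (Real.continuous_exp.comp (continuous_const.mul continuous_id)).intervalIntegrable _ _
  rw [intervalIntegral.integral_add (by exact ((i1.const_mul _).add (i2.const_mul _)))
      (i3.const_mul _),
    intervalIntegral.integral_add (i1.const_mul _) (i2.const_mul _),
    intervalIntegral.integral_const_mul, intervalIntegral.integral_const_mul,
    intervalIntegral.integral_const_mul, intervalIntegral.integral_const,
    exp_int a ha, exp_int (-a) (neg_ne_zero.mpr ha)]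
  have k1 : Real.exp (a*(c-1)) * Real.exp (-a * c) = Real.exp (-a) := by
    rw [← Real.exp_add]; ring_nf
  have k2 : Real.exp (a*(c-1)) * Real.exp (-a * (c-1)) = 1 := by
    rw [← Real.exp_add]; ring_nf; exact Real.exp_zero
  have k3 : Real.exp (-a*c) * Real.exp (a * c) = 1 := by
    rw [← Real.exp_add]; ring_nf; exact Real.exp_zero
  have k4 : Real.exp (-a*c) * Real.exp (a * (c-1)) = Real.exp (-a) := by
    rw [← Real.exp_add]; ring_nf
  simp only [smul_eq_mul]
  set E1 := Real.exp (a*(c-1)) with hE1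
  set E2 := Real.exp (-a*c) with hE2
  set E3 := Real.exp (-a*(c-1)) with hE3
  set E4 := Real.exp (a*c) with hE4
  set B := Real.exp (-a) with hB
  field_simp
  linear_combination (2*k1 - k2 - k3)


/-- Quadruple integral identity for `E[η_k² η_j²]`: for `a > 0` and integers
`j ≤ k − 1`,
`∫_{k−1}^{k}∫_{k−1}^{k}∫_{j−1}^{j}∫_{j−1}^{j}
  [(1/(4a²)) e^{−a|t−s|} e^{−a|r−q|} + (1/(2a²)) e^{−a(t+s)} e^{a(r+q)}] dq dr ds dt
 = (e^{−a} − 1 + a)²/a⁶ + (e^{2a}(1 − e^{−a})⁴/(2a⁶)) e^{−2a(k−j)}`. -/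
theorem quadruple_integral_eta_sq (a : ℝ) (ha : 0 < a) (j k : ℤ) (hjk : j ≤ k - 1) :
    (∫ t in ((k:ℝ) - 1)..(k:ℝ), ∫ s in ((k:ℝ) - 1)..(k:ℝ),
      ∫ u in ((j:ℝ) - 1)..(j:ℝ), ∫ q in ((j:ℝ) - 1)..(j:ℝ),
        (1 / (4 * a ^ 2) * Real.exp (-a * |t - s|) * Real.exp (-a * |u - q|)
          + 1 / (2 * a ^ 2) * Real.exp (-a * (t + s)) * Real.exp (a * (u + q))))
      = (Real.exp (-a) - 1 + a) ^ 2 / a ^ 6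
        + Real.exp (2 * a) * (1 - Real.exp (-a)) ^ 4 / (2 * a ^ 6)
            * Real.exp (-2 * a * ((k:ℝ) - (j:ℝ))) := by
  have ha' : a ≠ 0 := ne_of_gt ha
  have hcexp : ∀ b : ℝ, Continuous fun x : ℝ => Real.exp (b * x) := fun b =>
    Real.continuous_exp.comp (continuous_const.mul continuous_id)
  have hcf : ∀ c : ℝ, Continuous fun u : ℝ =>
      (2 - Real.exp (-a * (u - (c - 1))) - Real.exp (-a * (c - u))) / a := by
    intro c; fun_prop
  set Ej : ℝ := (Real.exp (a * (j:ℝ)) - Real.exp (a * ((j:ℝ) - 1))) / a with hEj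
  set Ek : ℝ := (Real.exp (-a * (k:ℝ)) - Real.exp (-a * ((k:ℝ) - 1))) / (-a) with hEk
  set Av : ℝ := 2 * (Real.exp (-a) - 1 + a) / a ^ 2 with hAv
  -- innermost integral over q
  have hq : ∀ t s u : ℝ,
      (∫ q in ((j:ℝ) - 1)..(j:ℝ),
        (1 / (4 * a ^ 2) * Real.exp (-a * |t - s|) * Real.exp (-a * |u - q|)
          + 1 / (2 * a ^ 2) * Real.exp (-a * (t + s)) * Real.exp (a * (u + q))))
      = (1 / (4 * a ^ 2) * Real.exp (-a * |t - s|)) *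
          (∫ q in ((j:ℝ) - 1)..(j:ℝ), Real.exp (-a * |u - q|))
        + (1 / (2 * a ^ 2) * Real.exp (-a * (t + s)) * Real.exp (a * u)) * Ej := by
    intro t s u
    have hcongr : Set.EqOn
        (fun q => 1 / (4 * a ^ 2) * Real.exp (-a * |t - s|) * Real.exp (-a * |u - q|)
          + 1 / (2 * a ^ 2) * Real.exp (-a * (t + s)) * Real.exp (a * (u + q)))
        (fun q => (1 / (4 * a ^ 2) * Real.exp (-a * |t - s|)) * Real.exp (-a * |u - q|)
          + (1 / (2 * a ^ 2) * Real.exp (-a * (t + s)) * Real.exp (a * u)) * Real.exp (a * q))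
        (Set.uIcc ((j:ℝ) - 1) (j:ℝ)) := by
      intro q _
      show 1 / (4 * a ^ 2) * Real.exp (-a * |t - s|) * Real.exp (-a * |u - q|)
          + 1 / (2 * a ^ 2) * Real.exp (-a * (t + s)) * Real.exp (a * (u + q)) = _
      rw [show a * (u + q) = a * u + a * q by ring, Real.exp_add]
      ring
    rw [intervalIntegral.integral_congr hcongr,
      split_int _ _ _ _ _ _ ((cont_abs a u).intervalIntegrable _ _)
        ((hcexp a).intervalIntegrable _ _),
      exp_int a ha']
  -- integral over u
  have hu : ∀ t s : ℝ,
      (∫ u in ((j:ℝ) - 1)..(j:ℝ), ∫ q in ((j:ℝ) - 1)..(j:ℝ),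
        (1 / (4 * a ^ 2) * Real.exp (-a * |t - s|) * Real.exp (-a * |u - q|)
          + 1 / (2 * a ^ 2) * Real.exp (-a * (t + s)) * Real.exp (a * (u + q))))
      = (1 / (4 * a ^ 2) * Av) * Real.exp (-a * |t - s|)
        + (1 / (2 * a ^ 2) * Ej * Ej * Real.exp (-a * t)) * Real.exp (-a * s) := by
    intro t s
    have hcongr : Set.EqOn
        (fun u => ∫ q in ((j:ℝ) - 1)..(j:ℝ),
          (1 / (4 * a ^ 2) * Real.exp (-a * |t - s|) * Real.exp (-a * |u - q|)
            + 1 / (2 * a ^ 2) * Real.exp (-a * (t + s)) * Real.exp (a * (u + q))))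
        (fun u => (1 / (4 * a ^ 2) * Real.exp (-a * |t - s|)) *
            ((2 - Real.exp (-a * (u - ((j:ℝ) - 1))) - Real.exp (-a * ((j:ℝ) - u))) / a)
          + (1 / (2 * a ^ 2) * Real.exp (-a * (t + s)) * Ej) * Real.exp (a * u))
        (Set.uIcc ((j:ℝ) - 1) (j:ℝ)) := by
      intro u hmem
      rw [Set.uIcc_of_le (by linarith : (j:ℝ) - 1 ≤ (j:ℝ))] at hmem
      show (∫ q in ((j:ℝ) - 1)..(j:ℝ), _) = _
      rw [hq t s u, exp_abs_int a ha' (j:ℝ) u hmem.1 hmem.2]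
      ring
    rw [intervalIntegral.integral_congr hcongr,
      split_int _ _ _ _ _ _ ((hcf (j:ℝ)).intervalIntegrable _ _)
        ((hcexp a).intervalIntegrable _ _),
      closed_int a ha' (j:ℝ), exp_int a ha']
    rw [show -a * (t + s) = -a * t + -a * s by ring, Real.exp_add]
    ring
  -- integral over s
  have hs : ∀ t : ℝ, t ∈ Set.Icc ((k:ℝ) - 1) (k:ℝ) →
      (∫ s in ((k:ℝ) - 1)..(k:ℝ), ∫ u in ((j:ℝ) - 1)..(j:ℝ), ∫ q in ((j:ℝ) - 1)..(j:ℝ),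
        (1 / (4 * a ^ 2) * Real.exp (-a * |t - s|) * Real.exp (-a * |u - q|)
          + 1 / (2 * a ^ 2) * Real.exp (-a * (t + s)) * Real.exp (a * (u + q))))
      = (1 / (4 * a ^ 2) * Av) *
          ((2 - Real.exp (-a * (t - ((k:ℝ) - 1))) - Real.exp (-a * ((k:ℝ) - t))) / a)
        + (1 / (2 * a ^ 2) * Ej * Ej * Ek) * Real.exp (-a * t) := by
    intro t hmem
    have hcongr : Set.EqOn
        (fun s => ∫ u in ((j:ℝ) - 1)..(j:ℝ), ∫ q in ((j:ℝ) - 1)..(j:ℝ),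
          (1 / (4 * a ^ 2) * Real.exp (-a * |t - s|) * Real.exp (-a * |u - q|)
            + 1 / (2 * a ^ 2) * Real.exp (-a * (t + s)) * Real.exp (a * (u + q))))
        (fun s => (1 / (4 * a ^ 2) * Av) * Real.exp (-a * |t - s|)
          + (1 / (2 * a ^ 2) * Ej * Ej * Real.exp (-a * t)) * Real.exp (-a * s))
        (Set.uIcc ((k:ℝ) - 1) (k:ℝ)) := by
      intro s _
      exact hu t s
    rw [intervalIntegral.integral_congr hcongr,
      split_int _ _ _ _ _ _ ((cont_abs a t).intervalIntegrable _ _)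
        ((hcexp (-a)).intervalIntegrable _ _),
      exp_abs_int a ha' (k:ℝ) t hmem.1 hmem.2, exp_int (-a) (neg_ne_zero.mpr ha')]
    rw [hEk]
    ring
  -- integral over t
  rw [intervalIntegral.integral_congr (g := fun t =>
      (1 / (4 * a ^ 2) * Av) *
        ((2 - Real.exp (-a * (t - ((k:ℝ) - 1))) - Real.exp (-a * ((k:ℝ) - t))) / a)
      + (1 / (2 * a ^ 2) * Ej * Ej * Ek) * Real.exp (-a * t))
      (fun t hmem => hs t (by rwa [Set.uIcc_of_le (by linarith : (k:ℝ) - 1 ≤ (k:ℝ))] at hmem)),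
    split_int _ _ _ _ _ _ ((hcf (k:ℝ)).intervalIntegrable _ _)
      ((hcexp (-a)).intervalIntegrable _ _),
    closed_int a ha' (k:ℝ), exp_int (-a) (neg_ne_zero.mpr ha')]
  -- final arithmetic
  rw [hAv, hEj, hEk]
  have h1 : Real.exp (a * ((j:ℝ) - 1)) = Real.exp (a * (j:ℝ)) * Real.exp (-a) := by
    rw [← Real.exp_add]; ring_nf
  have h2 : Real.exp (-a * ((k:ℝ) - 1)) = Real.exp (-a * (k:ℝ)) * Real.exp a := by
    rw [← Real.exp_add]; ring_nf
  have h3 : Real.exp (-2 * a * ((k:ℝ) - (j:ℝ)))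
      = Real.exp (-a * (k:ℝ)) * Real.exp (-a * (k:ℝ)) * (Real.exp (a * (j:ℝ)) * Real.exp (a * (j:ℝ))) := by
    rw [← Real.exp_add, ← Real.exp_add, ← Real.exp_add]; ring_nf
  have h4 : Real.exp (2 * a) = Real.exp a * Real.exp a := by
    rw [← Real.exp_add]; ring_nf
  have hEF : Real.exp a * Real.exp (-a) = 1 := by
    rw [← Real.exp_add]; simp
  rw [h1, h2, h3, h4]
  set E := Real.exp a
  set F := Real.exp (-a)
  set J := Real.exp (a * (j:ℝ))
  set K := Real.exp (-a * (k:ℝ))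

  linear_combination (J*J*(1-F)^2*K*K/(2*a^6)) * (2*E - 1 - E*F) * hEF
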